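/- Let p(z) = 1 + c₁z + c₂z² + ⋯ be analytic on the unit disc with Re(p(z)) > 0, and let v ∈ ℝ. Then |c₂ - v c₁²| ≤ -4v + 2 if v ≤ 0; |c₂ - v c₁²| ≤ 2 if 0 ≤ v ≤ 1; and |c₂ - v c₁²| ≤ 4v - 2 if v ≥ 1. -/

import Mathlib

open Metric Complex

lemma coeff_two_eq {f : ℂ → ℂ} {q : FormalMultilinearSeries ℂ ℂ ℂ}
    (hf : HasFPowerSeriesAt f q 0) : deriv (dslope f 0) 0 = iteratedDeriv 2 f 0 / 2 := by
  have hg : HasFPowerSeriesAt (dslope f 0) q.fslope 0 := hf.has_fpower_series_dslope_fslope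
  set g := dslope f 0 with hgdef
  have hga : AnalyticAt ℂ g 0 := hg.analyticAt
  have hfeq : ∀ z, f z = f 0 + z * g z := by
    intro z
    have h := sub_smul_dslope f 0 z
    rw [sub_zero, smul_eq_mul] at h
    rw [← hgdef] at h
    exact sub_eq_iff_eq_add'.mp h.symm
  obtain ⟨s, hs, hsan⟩ := hga.eventually_analyticAt.exists_mem
  have hsan' : AnalyticOnNhd ℂ g s := hsan
  have hderiv : deriv f =ᶠ[nhds 0] fun z => g z + z * deriv g z := by
    filter_upwards [hs] with z hz
    have h1 : DifferentiableAt ℂ g z := (hsan' z hz).differentiableAt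
    have h2 : deriv f z = deriv (fun w => f 0 + w * g w) z := by
      congr 1; funext w; exact hfeq w
    rw [h2, deriv_const_add, deriv_fun_mul differentiableAt_fun_id h1]
    simp
  have h2 : iteratedDeriv 2 f 0 = deriv (deriv f) 0 := by
    rw [iteratedDeriv_succ, iteratedDeriv_one]
  rw [h2, hderiv.deriv_eq]
  have hgd : DifferentiableAt ℂ g 0 := hga.differentiableAt
  have hgd' : DifferentiableAt ℂ (deriv g) 0 := (hsan'.deriv 0 (mem_of_mem_nhds hs)).differentiableAt
  rw [deriv_fun_add (g := fun z => z * deriv g z) hgd (differentiableAt_fun_id.mul hgd'), deriv_fun_mul differentiableAt_fun_id hgd']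
  simp


lemma schwarz_pick_zero {g : ℂ → ℂ} (hd : DifferentiableOn ℂ g (ball 0 1))
    (hb : ∀ z ∈ ball (0:ℂ) 1, ‖g z‖ ≤ 1) :
    ‖deriv g 0‖ ≤ 1 - ‖g 0‖ ^ 2 := by
  have h0mem : (0:ℂ) ∈ ball (0:ℂ) 1 := by simp
  by_cases hcon : ∃ z₀ ∈ ball (0:ℂ) 1, ‖g z₀‖ = 1
  · obtain ⟨z₀, hz₀, habs⟩ := hcon
    have hmax : IsMaxOn (norm ∘ g) (ball 0 1) z₀ := by
      intro z hz
      simp only [Function.comp_apply, habs]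
      exact hb z hz
    have heq := Complex.eqOn_of_isPreconnected_of_isMaxOn_norm
      (convex_ball (0:ℂ) 1).isPreconnected isOpen_ball hd hz₀ hmax
    have hev : g =ᶠ[nhds 0] fun _ => g z₀ :=
      Filter.eventuallyEq_of_mem (isOpen_ball.mem_nhds h0mem) heq
    have hderiv0 : deriv g 0 = 0 := by
      rw [hev.deriv_eq]; simp
    have hg0 : g 0 = g z₀ := heq h0mem
    rw [hderiv0, hg0, habs]
    simp
  · push_neg at hcon
    have hlt : ∀ z ∈ ball (0:ℂ) 1, ‖g z‖ < 1 :=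
      fun z hz => lt_of_le_of_ne (hb z hz) (hcon z hz)
    set a := g 0 with ha
    have ha1 : ‖a‖ < 1 := hlt 0 h0mem
    have hden : ∀ z ∈ ball (0:ℂ) 1, 1 - (starRingEnd ℂ) a * g z ≠ 0 := by
      intro z hz heq0
      have h1 : ‖(starRingEnd ℂ) a * g z‖ < 1 := by
        rw [norm_mul, Complex.norm_conj]
        have := hlt z hz
        have := norm_nonneg (g z)
        have := norm_nonneg a
        nlinarith
      have h2 : (starRingEnd ℂ) a * g z = 1 := by linear_combination -heq0
      rw [h2] at h1; simp at h1
    set h : ℂ → ℂ := fun z => (g z - a) / (1 - (starRingEnd ℂ) a * g z) with hh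
    have hd' : DifferentiableOn ℂ h (ball 0 1) :=
      (hd.sub_const a).div ((differentiableOn_const 1).sub ((differentiableOn_const _).mul hd)) hden
    have h0 : h 0 = 0 := by simp [hh, ← ha]
    have hmapsh : Set.MapsTo h (ball 0 1) (ball (0:ℂ) 1) := by
      intro z hz
      have key : Complex.normSq (1 - (starRingEnd ℂ) a * g z) - Complex.normSq (g z - a)
          = (1 - Complex.normSq a) * (1 - Complex.normSq (g z)) := by
        simp only [Complex.normSq_apply, Complex.sub_re, Complex.sub_im, Complex.one_re,
          Complex.one_im, Complex.mul_re, Complex.mul_im, Complex.conj_re, Complex.conj_im]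
        ring
      have hsa : Complex.normSq a < 1 := by
        rw [← Complex.sq_norm]; nlinarith [norm_nonneg a]
      have hsz : Complex.normSq (g z) < 1 := by
        rw [← Complex.sq_norm]; nlinarith [norm_nonneg (g z), hlt z hz]
      have hpos : Complex.normSq (g z - a) < Complex.normSq (1 - (starRingEnd ℂ) a * g z) := by
        nlinarith
      simp only [mem_ball, dist_zero_right, hh]
      rw [norm_div, div_lt_one (by
        have := norm_pos_iff.mpr (hden z hz); exact this)]
      have e1 := Complex.sq_norm (g z - a)
      have e2 := Complex.sq_norm (1 - (starRingEnd ℂ) a * g z)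
      nlinarith [norm_nonneg (g z - a), norm_nonneg (1 - (starRingEnd ℂ) a * g z)]
    have hder := Complex.norm_deriv_le_one_of_mapsTo_ball hd' (by rw [h0]; exact hmapsh.mono_right ball_subset_closedBall) one_pos
    -- compute deriv h 0
    have hgd : DifferentiableAt ℂ g 0 := hd.differentiableAt (isOpen_ball.mem_nhds h0mem)
    have hconj : (starRingEnd ℂ) a * a = (Complex.normSq a : ℂ) := by
      rw [mul_comm, Complex.mul_conj]
    have hdenne : (1:ℂ) - (Complex.normSq a : ℂ) ≠ 0 := by
      intro hzero
      have : (Complex.normSq a : ℂ) = 1 := by linear_combination -hzero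
      have : Complex.normSq a = 1 := by exact_mod_cast this
      rw [← Complex.sq_norm] at this; nlinarith [norm_nonneg a]
    have hderh : deriv h 0 = deriv g 0 / (1 - (Complex.normSq a : ℂ)) := by
      have hconj0 : (1:ℂ) - (starRingEnd ℂ) a * g 0 = 1 - (Complex.normSq a : ℂ) := by
        rw [ha, mul_comm, Complex.mul_conj]
      rw [hh]
      rw [deriv_fun_div (d := fun z => 1 - (starRingEnd ℂ) a * g z) (hgd.sub_const a)
        ((differentiableAt_const (1:ℂ)).sub ((differentiableAt_const _).mul hgd))
        (hden 0 h0mem)]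
      rw [deriv_sub_const, deriv_const_sub, deriv_const_mul _ hgd]
      rw [show g 0 - a = 0 by rw [ha, sub_self], hconj0]
      field_simp
      ring
    have habsden : ‖(1:ℂ) - (Complex.normSq a : ℂ)‖ = 1 - Complex.normSq a := by
      rw [show (1:ℂ) - (Complex.normSq a:ℂ) = ((1 - Complex.normSq a : ℝ):ℂ) by push_cast; ring,
        Complex.norm_real, Real.norm_eq_abs, abs_of_pos]
      nlinarith [Complex.sq_norm a, norm_nonneg a, ha1]
    rw [hderh, norm_div, habsden] at hder
    have hpos : 0 < 1 - Complex.normSq a := by nlinarith [Complex.sq_norm a, norm_nonneg a, ha1]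
    rw [div_le_one hpos] at hder
    rw [Complex.sq_norm]
    exact hder

theorem ma_minda_lemma (P : ℂ → ℂ) (hP : AnalyticOn ℂ P (ball 0 1))
    (hP0 : P 0 = 1) (hre : ∀ z ∈ ball (0 : ℂ) 1, 0 < (P z).re)
    (c₁ c₂ : ℂ) (hc₁ : c₁ = deriv P 0) (hc₂ : c₂ = iteratedDeriv 2 P 0 / 2)
    (v : ℝ) :
    (v ≤ 0 → ‖c₂ - (v : ℂ) * c₁ ^ 2‖ ≤ -4 * v + 2) ∧
    (0 ≤ v → v ≤ 1 → ‖c₂ - (v : ℂ) * c₁ ^ 2‖ ≤ 2) ∧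
    (1 ≤ v → ‖c₂ - (v : ℂ) * c₁ ^ 2‖ ≤ 4 * v - 2) := by
  have h0mem : (0:ℂ) ∈ ball (0:ℂ) 1 := by simp
  have hPnhd : AnalyticOnNhd ℂ P (ball 0 1) := (isOpen_ball.analyticOn_iff_analyticOnNhd).mp hP
  have hne : ∀ z ∈ ball (0:ℂ) 1, P z + 1 ≠ 0 := by
    intro z hz hzero
    have h1 := hre z hz
    have h2 : (P z + 1).re = (P z).re + 1 := by simp
    rw [hzero] at h2
    simp at h2
    linarith
  set ω : ℂ → ℂ := fun z => (P z - 1) / (P z + 1) with hωdef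
  have hωa : AnalyticOnNhd ℂ ω (ball 0 1) :=
    (hPnhd.sub analyticOnNhd_const).div (hPnhd.add analyticOnNhd_const) hne
  have hω0 : ω 0 = 0 := by simp [hωdef, hP0]
  have hmaps : Set.MapsTo ω (ball 0 1) (ball (0:ℂ) 1) := by
    intro z hz
    have hkey : Complex.normSq (P z + 1) - Complex.normSq (P z - 1) = 4 * (P z).re := by
      simp only [Complex.normSq_apply, Complex.add_re, Complex.add_im, Complex.sub_re,
        Complex.sub_im, Complex.one_re, Complex.one_im]
      ring
    have h1 : ‖P z - 1‖ < ‖P z + 1‖ := by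
      have e1 := Complex.sq_norm (P z + 1)
      have e2 := Complex.sq_norm (P z - 1)
      nlinarith [hre z hz, norm_nonneg (P z - 1), norm_nonneg (P z + 1)]
    simp only [mem_ball, dist_zero_right, hωdef]
    rw [norm_div, div_lt_one (norm_pos_iff.mpr (hne z hz))]
    exact h1
  -- Schwarz on dslope
  set g : ℂ → ℂ := dslope ω 0 with hgdef
  have hωd : DifferentiableOn ℂ ω (ball 0 1) := hωa.differentiableOn
  have hgb : ∀ z ∈ ball (0:ℂ) 1, ‖g z‖ ≤ 1 := by
    intro z hz
    have := Complex.norm_dslope_le_div_of_mapsTo_ball hωd (by rw [hω0]; exact hmaps.mono_right ball_subset_closedBall) hz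
    simpa using this
  have hgd : DifferentiableOn ℂ g (ball 0 1) :=
    (differentiableOn_dslope (isOpen_ball.mem_nhds h0mem)).mpr hωd
  -- derivatives of ω
  have hPd : DifferentiableAt ℂ P 0 := (hPnhd 0 h0mem).differentiableAt
  have hg0 : g 0 = c₁ / 2 := by
    rw [hgdef, dslope_same]
    rw [hωdef]
    rw [deriv_fun_div (hPd.sub_const 1) (hPd.add_const 1) (hne 0 h0mem)]
    rw [deriv_sub_const, deriv_add_const]
    rw [hP0, ← hc₁]
    norm_num
    ring
  -- second derivative of ω
  have hω2 : iteratedDeriv 2 ω 0 = c₂ - c₁ ^ 2 / 2 := by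
    have hev : deriv ω =ᶠ[nhds 0] fun z => 2 * deriv P z / (P z + 1) ^ 2 := by
      filter_upwards [isOpen_ball.mem_nhds h0mem] with z hz
      have hPz : DifferentiableAt ℂ P z := (hPnhd z hz).differentiableAt
      rw [hωdef]
      rw [deriv_fun_div (hPz.sub_const 1) (hPz.add_const 1) (hne z hz)]
      rw [deriv_sub_const, deriv_add_const]
      have hnz := hne z hz
      field_simp
      ring
    rw [iteratedDeriv_succ, iteratedDeriv_one, hev.deriv_eq]
    have hP' : DifferentiableAt ℂ (deriv P) 0 := (hPnhd.deriv 0 h0mem).differentiableAt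
    have hden : DifferentiableAt ℂ (fun z => (P z + 1) ^ 2) 0 :=
      ((hPd.add_const 1).pow 2)
    have hdenne : ((P 0 + 1) ^ 2 : ℂ) ≠ 0 := pow_ne_zero 2 (hne 0 h0mem)
    rw [deriv_fun_div (c := fun z => 2 * deriv P z) ((differentiableAt_const (2:ℂ)).mul hP') hden hdenne]
    rw [deriv_const_mul _ hP']
    have hpow : deriv (fun z => (P z + 1) ^ 2) 0 = 2 * (P 0 + 1) * deriv P 0 := by
      have := ((hPd.add_const 1).hasDerivAt.pow 2).deriv
      simp only [Nat.cast_ofNat, pow_one] at this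
      rw [show (fun z => (P z + 1) ^ 2) = (fun y => P y + 1) ^ 2 from rfl, this]
      rw [deriv_add_const]
      ring_nf
    rw [hpow, hP0, ← hc₁]
    have h2 : deriv (deriv P) 0 = 2 * c₂ := by
      rw [hc₂, show iteratedDeriv 2 P 0 = deriv (deriv P) 0 from by
        rw [iteratedDeriv_succ, iteratedDeriv_one]]
      ring
    rw [h2]
    norm_num
    ring
  -- power series coefficients of g
  obtain ⟨q, hq⟩ := hωa 0 h0mem
  have hderivg : deriv g 0 = (c₂ - c₁ ^ 2 / 2) / 2 := by
    rw [hgdef, coeff_two_eq hq, hω2]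
  -- Schwarz–Pick bound
  have hsp := schwarz_pick_zero hgd hgb
  rw [hg0, hderivg] at hsp
  have hc1b : ‖c₁ / 2‖ ≤ 1 := by rw [← hg0]; exact hgb 0 h0mem
  -- arithmetic
  set t : ℝ := ‖c₁‖ ^ 2 with htdef
  have ht0 : 0 ≤ t := sq_nonneg _
  have ht4 : t ≤ 4 := by
    rw [norm_div] at hc1b
    simp only [Complex.norm_two] at hc1b
    nlinarith [norm_nonneg c₁]
  have hK : ‖c₂ - c₁ ^ 2 / 2‖ ≤ 2 - t / 2 := by
    rw [norm_div, norm_div] at hsp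
    simp only [Complex.norm_two] at hsp
    rw [htdef]
    nlinarith [norm_nonneg (c₂ - c₁ ^ 2 / 2)]
  have htri : ∀ u : ℝ, ‖c₂ - (u : ℂ) * c₁ ^ 2‖ ≤
      ‖c₂ - c₁ ^ 2 / 2‖ + |1/2 - u| * t := by
    intro u
    have hsplit : c₂ - (u : ℂ) * c₁ ^ 2 = (c₂ - c₁ ^ 2 / 2) + ((1/2 - u : ℝ) : ℂ) * c₁ ^ 2 := by
      push_cast
      ring
    rw [hsplit]
    refine (norm_add_le _ _).trans ?_
    rw [norm_mul, Complex.norm_real, Real.norm_eq_abs, norm_pow]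
  refine ⟨?_, ?_, ?_⟩
  · intro hv
    have h := htri v
    rw [_root_.abs_of_nonneg (by linarith)] at h
    nlinarith
  · intro hv0 hv1
    have h := htri v
    rcases le_or_gt v (1/2) with hv | hv
    · rw [_root_.abs_of_nonneg (by linarith)] at h
      nlinarith
    · rw [_root_.abs_of_neg (by linarith)] at h
      nlinarith
  · intro hv
    have h := htri v
    rw [_root_.abs_of_neg (by linarith)] at h
    nlinarith
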